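/- arXiv:2512.21418 — 3 statements merged into one kernel-verified Lean document; each statement's English description precedes it below -/
import Mathlib

section
/- Let A → B be a weakly étale ring homomorphism (i.e., B is flat over A and B is flat over B ⊗_A B). If M is a B-module that is flat as an A-module, then M is flat as a B-module. -/
open TensorProduct

/-- `LinearMap.lTensor` as an algebra homomorphism on endomorphism algebras. -/
noncomputable def lTensorEndAlgHom (A M N : Type*) [CommRing A]
    [AddCommGroup M] [Module A M] [AddCommGroup N] [Module A N] :
    Module.End A N →ₐ[A] Module.End A (M ⊗[A] N) where
  toFun := LinearMap.lTensor M
  map_one' := LinearMap.lTensor_id M N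
  map_mul' f g := LinearMap.lTensor_comp M f g
  map_zero' := LinearMap.lTensor_zero M
  map_add' := LinearMap.lTensor_add M
  commutes' a := by
    apply TensorProduct.ext'
    intro m n
    simp [Module.algebraMap_end_apply, tmul_smul]

/-- Moving a base-ring scalar across a tensor product. -/
theorem auxMoveSmul {R C X : Type*} [CommRing R] [CommRing C] [Algebra R C]
    [AddCommGroup X] [Module R X] (r : R) (c : C) (x : X) :
    (r • c) ⊗ₜ[R] x = c ⊗ₜ[R] (r • x) :=
  smul_tmul r c x

set_option maxHeartbeats 2000000 in
/-- If `A → B` is weakly étale (`B` flat over `A` and `B` flat over `B ⊗[A] B` via the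
multiplication map) and `M` is a `B`-module which is flat over `A`, then `M` is flat over `B`. -/
theorem stmt0 (A B M : Type*) [CommRing A] [CommRing B] [Algebra A B]
    [AddCommGroup M] [Module A M] [Module B M] [IsScalarTower A B M]
    [Module.Flat A B]
    (hmul :
      letI : Algebra (B ⊗[A] B) B := (Algebra.TensorProduct.lmul' A (S := B)).toRingHom.toAlgebra
      Module.Flat (B ⊗[A] B) B)
    [Module.Flat A M] : Module.Flat B M := by
  letI : Algebra (B ⊗[A] B) B :=
    (Algebra.TensorProduct.lmul' A (S := B)).toRingHom.toAlgebra
  letI : Module.Flat (B ⊗[A] B) B := hmul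
  have halg : ∀ r : B ⊗[A] B, algebraMap (B ⊗[A] B) B r = Algebra.TensorProduct.lmul' A r :=
    fun _ => rfl
  rw [Module.Flat.iff_lTensor_preserves_injective_linearMap]
  intro N N' _ _ _ _ f hf
  -- A-module structures on N and N'
  letI : Module A N := Module.compHom N (algebraMap A B)
  letI : Module A N' := Module.compHom N' (algebraMap A B)
  letI : IsScalarTower A B N :=
    ⟨fun a b n => by
      show (a • b) • n = (algebraMap A B a) • b • n
      rw [Algebra.smul_def, mul_smul]⟩
  letI : IsScalarTower A B N' :=
    ⟨fun a b n => by
      show (a • b) • n = (algebraMap A B a) • b • n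
      rw [Algebra.smul_def, mul_smul]⟩
  -- the A-linear version of f and its tensor with M over A
  set fA : N →ₗ[A] N' := f.restrictScalars A with hfA
  set F₀ : M ⊗[A] N →ₗ[A] M ⊗[A] N' := LinearMap.lTensor M fA with hF₀def
  have hF₀ : Function.Injective F₀ :=
    Module.Flat.lTensor_preserves_injective_linearMap fA hf
  -- the (B ⊗[A] B)-module structure on M ⊗[A] N and M ⊗[A] N'
  let ρfun : ∀ (N₀ : Type _) [AddCommGroup N₀] [Module A N₀] [Module B N₀]
      [IsScalarTower A B N₀], (B ⊗[A] B) →ₐ[A] Module.End A (M ⊗[A] N₀) :=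
    fun N₀ _ _ _ _ =>
      Algebra.TensorProduct.lift
        ((Algebra.lsmul A A (M ⊗[A] N₀) : B →ₐ[A] Module.End A (M ⊗[A] N₀)))
        ((lTensorEndAlgHom A M N₀).comp
          (Algebra.lsmul A A N₀ : B →ₐ[A] Module.End A N₀))
        (by
          intro b₁ b₂
          apply TensorProduct.ext'
          intro m n
          simp [Module.End.mul_apply, lTensorEndAlgHom, smul_tmul'])
  set ρ : (B ⊗[A] B) →ₐ[A] Module.End A (M ⊗[A] N) := ρfun N with hρ
  set ρ' : (B ⊗[A] B) →ₐ[A] Module.End A (M ⊗[A] N') := ρfun N' with hρ'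
  have hρtmul : ∀ (b₁ b₂ : B) (m : M) (n : N),
      ρ (b₁ ⊗ₜ[A] b₂) (m ⊗ₜ[A] n) = (b₁ • m) ⊗ₜ[A] (b₂ • n) := by
    intro b₁ b₂ m n
    simp [hρ, ρfun, Algebra.TensorProduct.lift_tmul, Module.End.mul_apply, lTensorEndAlgHom,
      smul_tmul']
  have hρ'tmul : ∀ (b₁ b₂ : B) (m : M) (n : N'),
      ρ' (b₁ ⊗ₜ[A] b₂) (m ⊗ₜ[A] n) = (b₁ • m) ⊗ₜ[A] (b₂ • n) := by
    intro b₁ b₂ m n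
    simp [hρ', ρfun, Algebra.TensorProduct.lift_tmul, Module.End.mul_apply, lTensorEndAlgHom,
      smul_tmul']
  letI modX : Module (B ⊗[A] B) (M ⊗[A] N) := Module.compHom _ ρ.toRingHom
  letI modX' : Module (B ⊗[A] B) (M ⊗[A] N') := Module.compHom _ ρ'.toRingHom
  have hsmulX : ∀ (r : B ⊗[A] B) (x : M ⊗[A] N), r • x = ρ r x := fun _ _ => rfl
  have hsmulX' : ∀ (r : B ⊗[A] B) (x : M ⊗[A] N'), r • x = ρ' r x := fun _ _ => rfl
  -- F₀ is (B ⊗[A] B)-linear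
  have hFcomm : ∀ (r : B ⊗[A] B) (x : M ⊗[A] N), F₀ (ρ r x) = ρ' r (F₀ x) := by
    intro r x
    induction r using TensorProduct.induction_on with
    | zero => simp
    | tmul b₁ b₂ =>
      induction x using TensorProduct.induction_on with
      | zero => simp
      | tmul m n =>
        rw [hρtmul]
        simp only [hF₀def, LinearMap.lTensor_tmul, hρ'tmul]
        congr 1
        exact f.map_smul b₂ n
      | add x y hx hy => simp [map_add, hx, hy]
    | add r s hr hs => simp [map_add, LinearMap.add_apply, hr, hs]
  set F : (M ⊗[A] N) →ₗ[B ⊗[A] B] (M ⊗[A] N') :=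
    { toFun := F₀
      map_add' := map_add F₀
      map_smul' := fun r x => hFcomm r x } with hF
  set G := LinearMap.lTensor B F with hGdef
  have hG : Function.Injective G :=
    Module.Flat.lTensor_preserves_injective_linearMap F hF₀
  -- canonical additive maps π : M ⊗[A] N →+ M ⊗[B] N
  let πfun : ∀ (N₀ : Type _) [AddCommGroup N₀] [Module A N₀] [Module B N₀]
      [IsScalarTower A B N₀], (M ⊗[A] N₀) →+ (M ⊗[B] N₀) :=
    fun N₀ _ _ _ _ =>
      TensorProduct.liftAddHom
        { toFun := fun m =>
            { toFun := fun n => m ⊗ₜ[B] n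
              map_zero' := tmul_zero _ m
              map_add' := fun n₁ n₂ => tmul_add m n₁ n₂ }
          map_zero' := by ext n; exact zero_tmul _ n
          map_add' := fun m₁ m₂ => by ext n; exact add_tmul m₁ m₂ n }
        (fun a m n => smul_tmul a m n)
  set π : (M ⊗[A] N) →+ (M ⊗[B] N) := πfun N with hπdef
  set π' : (M ⊗[A] N') →+ (M ⊗[B] N') := πfun N' with hπ'def
  have hπ : ∀ (m : M) (n : N), π (m ⊗ₜ[A] n) = m ⊗ₜ[B] n := fun m n => rfl
  have hπ' : ∀ (m : M) (n : N'), π' (m ⊗ₜ[A] n) = m ⊗ₜ[B] n := fun m n => rfl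
  -- π intertwines the (B ⊗[A] B)-action with the B-action via lmul'
  have hπs : ∀ (r : B ⊗[A] B) (x : M ⊗[A] N),
      π (r • x) = (Algebra.TensorProduct.lmul' A r : B) • π x := by
    intro r x
    induction r using TensorProduct.induction_on with
    | zero => simp [hsmulX]
    | tmul b₁ b₂ =>
      induction x using TensorProduct.induction_on with
      | zero => simp
      | tmul m n =>
        rw [hsmulX, hρtmul, hπ, hπ, Algebra.TensorProduct.lmul'_apply_tmul, ← smul_tmul',
          tmul_smul, smul_smul]
      | add x y hx hy =>
        rw [smul_add, map_add, map_add, hx, hy, smul_add]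
    | add r s hr hs =>
      simp only [add_smul, map_add, hr, hs]
  have hπ's : ∀ (r : B ⊗[A] B) (x : M ⊗[A] N'),
      π' (r • x) = (Algebra.TensorProduct.lmul' A r : B) • π' x := by
    intro r x
    induction r using TensorProduct.induction_on with
    | zero => simp [hsmulX']
    | tmul b₁ b₂ =>
      induction x using TensorProduct.induction_on with
      | zero => simp
      | tmul m n =>
        rw [hsmulX', hρ'tmul, hπ', hπ', Algebra.TensorProduct.lmul'_apply_tmul, ← smul_tmul',
          tmul_smul, smul_smul]
      | add x y hx hy =>
        rw [smul_add, map_add, map_add, hx, hy, smul_add]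
    | add r s hr hs =>
      simp only [add_smul, map_add, hr, hs]
  -- the maps σ : M ⊗[B] N →+ B ⊗[B ⊗[A] B] (M ⊗[A] N)
  set σ : (M ⊗[B] N) →+ (B ⊗[B ⊗[A] B] (M ⊗[A] N)) :=
    TensorProduct.liftAddHom
      { toFun := fun m =>
          { toFun := fun n => (1 : B) ⊗ₜ[B ⊗[A] B] (m ⊗ₜ[A] n)
            map_zero' := by
              show (1 : B) ⊗ₜ[B ⊗[A] B] (m ⊗ₜ[A] (0 : _)) = 0
              rw [tmul_zero, tmul_zero]
            map_add' := fun n₁ n₂ => by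
              show (1 : B) ⊗ₜ[B ⊗[A] B] (m ⊗ₜ[A] (n₁ + n₂)) =
                (1 : B) ⊗ₜ[B ⊗[A] B] (m ⊗ₜ[A] n₁) + (1 : B) ⊗ₜ[B ⊗[A] B] (m ⊗ₜ[A] n₂)
              rw [tmul_add, tmul_add] }
        map_zero' := by ext n; show (1 : B) ⊗ₜ[B ⊗[A] B] ((0 : M) ⊗ₜ[A] n) = 0
                        rw [zero_tmul, tmul_zero]
        map_add' := fun m₁ m₂ => by
          ext n
          show (1 : B) ⊗ₜ[B ⊗[A] B] ((m₁ + m₂) ⊗ₜ[A] n) = _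
          rw [add_tmul, tmul_add]; rfl }
      (fun b m n => by
        show (1 : B) ⊗ₜ[B ⊗[A] B] ((b • m) ⊗ₜ[A] n) = (1 : B) ⊗ₜ[B ⊗[A] B] (m ⊗ₜ[A] (b • n))
        have h₁ : (b • m) ⊗ₜ[A] n = (b ⊗ₜ[A] (1 : B)) • (m ⊗ₜ[A] n) := by
          rw [hsmulX, hρtmul, one_smul]
        have h₂ : m ⊗ₜ[A] (b • n) = ((1 : B) ⊗ₜ[A] b) • (m ⊗ₜ[A] n) := by
          rw [hsmulX, hρtmul, one_smul]
        rw [h₁, h₂, ← auxMoveSmul, ← auxMoveSmul]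
        congr 1
        show (algebraMap (B ⊗[A] B) B) (b ⊗ₜ[A] 1) * 1 = (algebraMap (B ⊗[A] B) B) (1 ⊗ₜ[A] b) * 1
        rw [halg, halg, Algebra.TensorProduct.lmul'_apply_tmul,
          Algebra.TensorProduct.lmul'_apply_tmul, one_mul, mul_one]) with hσdef
  set σ' : (M ⊗[B] N') →+ (B ⊗[B ⊗[A] B] (M ⊗[A] N')) :=
    TensorProduct.liftAddHom
      { toFun := fun m =>
          { toFun := fun n => (1 : B) ⊗ₜ[B ⊗[A] B] (m ⊗ₜ[A] n)
            map_zero' := by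
              show (1 : B) ⊗ₜ[B ⊗[A] B] (m ⊗ₜ[A] (0 : _)) = 0
              rw [tmul_zero, tmul_zero]
            map_add' := fun n₁ n₂ => by
              show (1 : B) ⊗ₜ[B ⊗[A] B] (m ⊗ₜ[A] (n₁ + n₂)) =
                (1 : B) ⊗ₜ[B ⊗[A] B] (m ⊗ₜ[A] n₁) + (1 : B) ⊗ₜ[B ⊗[A] B] (m ⊗ₜ[A] n₂)
              rw [tmul_add, tmul_add] }
        map_zero' := by ext n; show (1 : B) ⊗ₜ[B ⊗[A] B] ((0 : M) ⊗ₜ[A] n) = 0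
                        rw [zero_tmul, tmul_zero]
        map_add' := fun m₁ m₂ => by
          ext n
          show (1 : B) ⊗ₜ[B ⊗[A] B] ((m₁ + m₂) ⊗ₜ[A] n) = _
          rw [add_tmul, tmul_add]; rfl }
      (fun b m n => by
        show (1 : B) ⊗ₜ[B ⊗[A] B] ((b • m) ⊗ₜ[A] n) = (1 : B) ⊗ₜ[B ⊗[A] B] (m ⊗ₜ[A] (b • n))
        have h₁ : (b • m) ⊗ₜ[A] n = (b ⊗ₜ[A] (1 : B)) • (m ⊗ₜ[A] n) := by
          rw [hsmulX', hρ'tmul, one_smul]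
        have h₂ : m ⊗ₜ[A] (b • n) = ((1 : B) ⊗ₜ[A] b) • (m ⊗ₜ[A] n) := by
          rw [hsmulX', hρ'tmul, one_smul]
        rw [h₁, h₂, ← auxMoveSmul, ← auxMoveSmul]
        congr 1
        show (algebraMap (B ⊗[A] B) B) (b ⊗ₜ[A] 1) * 1 = (algebraMap (B ⊗[A] B) B) (1 ⊗ₜ[A] b) * 1
        rw [halg, halg, Algebra.TensorProduct.lmul'_apply_tmul,
          Algebra.TensorProduct.lmul'_apply_tmul, one_mul, mul_one]) with hσ'def
  have hσtmul : ∀ (m : M) (n : N), σ (m ⊗ₜ[B] n) = (1 : B) ⊗ₜ[B ⊗[A] B] (m ⊗ₜ[A] n) :=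
    fun m n => rfl
  have hσ'tmul : ∀ (m : M) (n : N'), σ' (m ⊗ₜ[B] n) = (1 : B) ⊗ₜ[B ⊗[A] B] (m ⊗ₜ[A] n) :=
    fun m n => rfl
  -- left inverse φ of σ
  set φ : (B ⊗[B ⊗[A] B] (M ⊗[A] N)) →+ (M ⊗[B] N) :=
    TensorProduct.liftAddHom
      { toFun := fun b =>
          { toFun := fun x => b • π x
            map_zero' := by show b • π 0 = 0; rw [map_zero, smul_zero]
            map_add' := fun x y => by
              show b • π (x + y) = b • π x + b • π y
              rw [map_add, smul_add] }
        map_zero' := by ext x; exact zero_smul B (π x)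
        map_add' := fun b₁ b₂ => by ext x; exact add_smul b₁ b₂ (π x) }
      (fun r b x => by
        show (r • b) • π x = b • π (r • x)
        rw [hπs, Algebra.smul_def, halg, mul_smul, smul_comm]) with hφdef
  have hφσ : ∀ y : M ⊗[B] N, φ (σ y) = y := by
    intro y
    induction y using TensorProduct.induction_on with
    | zero => simp
    | tmul m n =>
      rw [hσtmul]
      show (1 : B) • π (m ⊗ₜ[A] n) = m ⊗ₜ[B] n
      rw [one_smul, hπ]
    | add x y hx hy => rw [map_add, map_add, hx, hy]
  set φ' : (B ⊗[B ⊗[A] B] (M ⊗[A] N')) →+ (M ⊗[B] N') :=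
    TensorProduct.liftAddHom
      { toFun := fun b =>
          { toFun := fun x => b • π' x
            map_zero' := by show b • π' 0 = 0; rw [map_zero, smul_zero]
            map_add' := fun x y => by
              show b • π' (x + y) = b • π' x + b • π' y
              rw [map_add, smul_add] }
        map_zero' := by ext x; exact zero_smul B (π' x)
        map_add' := fun b₁ b₂ => by ext x; exact add_smul b₁ b₂ (π' x) }
      (fun r b x => by
        show (r • b) • π' x = b • π' (r • x)
        rw [hπ's, Algebra.smul_def, halg, mul_smul, smul_comm]) with hφ'def
  have hφ'σ' : ∀ y : M ⊗[B] N', φ' (σ' y) = y := by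
    intro y
    induction y using TensorProduct.induction_on with
    | zero => simp
    | tmul m n =>
      rw [hσ'tmul]
      show (1 : B) • π' (m ⊗ₜ[A] n) = m ⊗ₜ[B] n
      rw [one_smul, hπ']
    | add x y hx hy => rw [map_add, map_add, hx, hy]
  -- the commuting square
  have hsquare : ∀ y : M ⊗[B] N, G (σ y) = σ' ((f.lTensor M) y) := by
    intro y
    induction y using TensorProduct.induction_on with
    | zero => simp
    | tmul m n =>
      have hfl : (f.lTensor M) (m ⊗ₜ[B] n) = m ⊗ₜ[B] (f n) := LinearMap.lTensor_tmul M f m n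
      rw [hσtmul, hfl, hσ'tmul, hGdef, LinearMap.lTensor_tmul]
      congr 1
    | add x y hx hy => rw [map_add, map_add, map_add, map_add, hx, hy]
  -- conclude
  intro x y hxy
  have h1 : σ' ((f.lTensor M) x) = σ' ((f.lTensor M) y) := by rw [hxy]
  rw [← hsquare, ← hsquare] at h1
  have h2 : σ x = σ y := hG h1
  calc x = φ (σ x) := (hφσ x).symm
    _ = φ (σ y) := by rw [h2]
    _ = y := hφσ y
end

section
/- Let (A, 𝔪) → (B, 𝔫) be a local homomorphism of Noetherian local rings, M a finitely generated B-module flat over A, and h ∈ 𝔫 such that the image of h in M/𝔪M = M ⊗_A k is a nonzerodivisor on M/𝔪M. Then h is a nonzerodivisor on M and M/hM is flat over A. -/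
open IsLocalRing TensorProduct LinearMap


section core
variable {R M : Type*} [CommRing R] [AddCommGroup M] [Module R M]

/-- The multiplication map `J ⊗ M → M` as lid ∘ rTensor. -/
noncomputable def slicePhi (J : Ideal R) : J ⊗[R] M →ₗ[R] M :=
  (TensorProduct.lid R M).toLinearMap ∘ₗ (J.subtype.rTensor M)

@[simp] lemma slicePhi_tmul (J : Ideal R) (j : J) (m : M) :
    slicePhi J (j ⊗ₜ[R] m) = (j : R) • m := rfl

lemma slicePhi_range (J : Ideal R) :
    LinearMap.range (slicePhi (M := M) J) = J • ⊤ := by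
  apply le_antisymm
  · rintro x ⟨t, rfl⟩
    induction t using TensorProduct.induction_on with
    | zero => simp
    | tmul j m => simpa using Submodule.smul_mem_smul j.2 Submodule.mem_top
    | add a b ha hb => rw [map_add]; exact Submodule.add_mem _ ha hb
  · intro x hx
    refine Submodule.smul_induction_on hx (fun j hj m _ => ⟨⟨j, hj⟩ ⊗ₜ m, rfl⟩) ?_
    rintro a b ⟨s, rfl⟩ ⟨t, rfl⟩
    exact ⟨s + t, map_add _ _ _⟩

lemma slicePhi_injective (J : Ideal R) [Module.Flat R M] :
    Function.Injective (slicePhi (M := M) J) :=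
  (TensorProduct.lid R M).injective.comp
    ((Module.Flat.iff_rTensor_injective').mp inferInstance J)

lemma slicePhi_comp (J : Ideal R) (f : M →ₗ[R] M) :
    slicePhi J ∘ₗ f.lTensor J = f ∘ₗ slicePhi (M := M) J := by
  apply TensorProduct.ext'
  intro j m
  simp [slicePhi]



variable {R M : Type*} [CommRing R] [AddCommGroup M] [Module R M]

lemma smul_quot_zero (I : Ideal R) (J : Ideal R) {a : R} (ha : a ∈ I)
    (x : J ⊗[R] (M ⧸ (I • ⊤ : Submodule R M))) : a • x = 0 := by
  induction x using TensorProduct.induction_on with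
  | zero => simp
  | tmul j m =>
      obtain ⟨m, rfl⟩ := Submodule.mkQ_surjective _ m
      have h0 : a • Submodule.Quotient.mk (p := (I • ⊤ : Submodule R M)) m = 0 := by
        rw [← Submodule.Quotient.mk_smul, Submodule.Quotient.mk_eq_zero]
        exact Submodule.smul_mem_smul ha Submodule.mem_top
      rw [← tmul_smul, Submodule.mkQ_apply, h0, tmul_zero]
  | add s t hs ht => rw [smul_add, hs, ht, add_zero]

lemma ker_lTensor_mkQ_le (I : Ideal R) (J : Ideal R) {t : J ⊗[R] M}
    (ht : (Submodule.mkQ (I • ⊤ : Submodule R M)).lTensor J t = 0) :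
    t ∈ (I • ⊤ : Submodule R (J ⊗[R] M)) := by
  have hex := lTensor_exact (R := R) J (LinearMap.exact_subtype_mkQ (I • ⊤ : Submodule R M))
    (Submodule.mkQ_surjective _)
  obtain ⟨s, rfl⟩ := (hex t).mp ht
  clear ht
  induction s using TensorProduct.induction_on with
  | zero => simp
  | tmul j y =>
      rw [lTensor_tmul]
      exact Submodule.smul_induction_on
        (p := fun z => j ⊗ₜ[R] z ∈ (I • ⊤ : Submodule R (J ⊗[R] M))) y.2
        (fun a ha m _ => by
          show j ⊗ₜ[R] (a • m) ∈ _
          rw [tmul_smul]; exact Submodule.smul_mem_smul ha Submodule.mem_top)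
        (fun m₁ m₂ h₁ h₂ => by
          show j ⊗ₜ[R] (m₁ + m₂) ∈ _
          rw [tmul_add]; exact Submodule.add_mem _ h₁ h₂)
  | add s t hs ht => rw [map_add]; exact Submodule.add_mem _ hs ht

end core

section lem0
variable {R M : Type*} [CommRing R] [IsLocalRing R] [AddCommGroup M] [Module R M]
  [Module.Flat R M]

/-- Core step: if `f` is injective modulo the maximal ideal, then
`x ∈ J•M` and `f x ∈ 𝔪J•M` imply `x ∈ 𝔪J•M`. -/
lemma slice_step (f : M →ₗ[R] M)
    (hf : ∀ m : M, f m ∈ (maximalIdeal R • ⊤ : Submodule R M) → m ∈ (maximalIdeal R • ⊤ : Submodule R M))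
    (J : Ideal R) {x : M} (hx : x ∈ J • (⊤ : Submodule R M))
    (hfx : f x ∈ (maximalIdeal R * J) • (⊤ : Submodule R M)) :
    x ∈ (maximalIdeal R * J) • (⊤ : Submodule R M) := by
  classical
  set 𝔪 := maximalIdeal R
  set Mbar := M ⧸ (𝔪 • ⊤ : Submodule R M)
  -- the induced map on M/𝔪M
  have hmap : (𝔪 • ⊤ : Submodule R M) ≤ (𝔪 • ⊤ : Submodule R M).comap f := by
    rw [← Submodule.map_le_iff_le_comap, Submodule.map_smul'']
    exact Submodule.smul_mono le_rfl le_top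
  set fbar : Mbar →ₗ[R] Mbar := Submodule.mapQ _ _ f hmap with hfbar
  have hfbar_mk : ∀ m : M, fbar (Submodule.Quotient.mk m) = Submodule.Quotient.mk (f m) := by
    intro m; rfl
  -- fbar is injective
  have hfbar_inj : LinearMap.ker fbar = ⊥ := by
    rw [LinearMap.ker_eq_bot']
    intro m hm
    obtain ⟨m, rfl⟩ := Submodule.mkQ_surjective _ m
    rw [Submodule.mkQ_apply, hfbar_mk, Submodule.Quotient.mk_eq_zero] at hm
    rw [Submodule.mkQ_apply, Submodule.Quotient.mk_eq_zero]
    exact hf m hm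
  -- Mbar is a vector space over the residue field
  letI : Field (R ⧸ 𝔪) := Ideal.Quotient.field 𝔪
  set fk : Mbar →ₗ[R ⧸ 𝔪] Mbar :=
    { toFun := fbar, map_add' := map_add fbar,
      map_smul' := by
        rintro ⟨a⟩ x
        exact map_smul fbar a x } with hfk
  have hfk_inj : LinearMap.ker fk = ⊥ := by
    rw [LinearMap.ker_eq_bot'] at hfbar_inj ⊢
    exact fun m hm => hfbar_inj m hm
  obtain ⟨g, hg⟩ := fk.exists_leftInverse_of_injective hfk_inj
  set gR : Mbar →ₗ[R] Mbar :=
    { toFun := g, map_add' := map_add g,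
      map_smul' := fun a x => map_smul g (Ideal.Quotient.mk 𝔪 a) x } with hgR
  have hgf : gR ∘ₗ fbar = LinearMap.id := by
    ext m
    exact DFunLike.congr_fun hg (Submodule.Quotient.mk m)
  -- the tensored map is injective
  have hψinj : Function.Injective (fbar.lTensor J) := by
    have hli : Function.LeftInverse (gR.lTensor J) (fbar.lTensor J) := fun t => by
      rw [← LinearMap.comp_apply, ← LinearMap.lTensor_comp, hgf, LinearMap.lTensor_id,
        LinearMap.id_apply]
    exact hli.injective
  -- express x via the tensor product
  have hxr : x ∈ LinearMap.range (slicePhi (M := M) J) := by rw [slicePhi_range]; exact hx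
  obtain ⟨t, rfl⟩ := hxr
  rw [mul_smul] at hfx ⊢
  have hmapφ : Submodule.map (slicePhi (M := M) J) (𝔪 • ⊤) = 𝔪 • (J • ⊤ : Submodule R M) := by
    rw [Submodule.map_smul'', Submodule.map_top, slicePhi_range]
  have hcomm : f (slicePhi J t) = slicePhi J (f.lTensor J t) := by
    rw [← LinearMap.comp_apply, ← slicePhi_comp, LinearMap.comp_apply]
  rw [hcomm, ← hmapφ] at hfx
  obtain ⟨u, hu, huv⟩ := hfx
  have hψt : f.lTensor J t ∈ (𝔪 • ⊤ : Submodule R (J ⊗[R] M)) := by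
    have := slicePhi_injective (M := M) J huv
    rwa [← this]
  -- pass to the quotient J ⊗ Mbar
  set π : J ⊗[R] M →ₗ[R] J ⊗[R] Mbar := (Submodule.mkQ (𝔪 • ⊤ : Submodule R M)).lTensor J with hπ
  have hkerπ : (𝔪 • ⊤ : Submodule R (J ⊗[R] M)) ≤ LinearMap.ker π := by
    intro z hz
    refine Submodule.smul_induction_on (p := fun z => z ∈ LinearMap.ker π) hz
      (fun a ha s _ => ?_) (fun s₁ s₂ h₁ h₂ => Submodule.add_mem _ h₁ h₂)
    show a • s ∈ LinearMap.ker π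
    rw [LinearMap.mem_ker, map_smul]
    exact smul_quot_zero 𝔪 J ha _
  have hcq : (Submodule.mkQ (𝔪 • ⊤ : Submodule R M)) ∘ₗ f
      = fbar ∘ₗ (Submodule.mkQ (𝔪 • ⊤ : Submodule R M)) := by
    ext m
    exact (hfbar_mk m).symm
  have hsquare : π ∘ₗ f.lTensor J = fbar.lTensor J ∘ₗ π := by
    rw [hπ, ← LinearMap.lTensor_comp, hcq, LinearMap.lTensor_comp]
  have hπt : fbar.lTensor J (π t) = 0 := by
    have := congrArg (fun w => w t) hsquare
    simp only [LinearMap.comp_apply] at this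
    rw [← this]
    exact hkerπ hψt
  have hπt0 : π t = 0 := by
    apply hψinj
    rw [hπt, map_zero]
  have ht𝔪 : t ∈ (𝔪 • ⊤ : Submodule R (J ⊗[R] M)) := ker_lTensor_mkQ_le 𝔪 J hπt0
  rw [← hmapφ]
  exact Submodule.mem_map_of_mem ht𝔪

end lem0

section lem1
variable {R M : Type*} [CommRing R] [IsLocalRing R] [AddCommGroup M] [Module R M]
  [Module.Flat R M]

lemma slice_ker (f : M →ₗ[R] M)
    (hf : ∀ m : M, f m ∈ (maximalIdeal R • ⊤ : Submodule R M) →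
      m ∈ (maximalIdeal R • ⊤ : Submodule R M))
    {x : M} (hx : f x = 0) (n : ℕ) :
    x ∈ ((maximalIdeal R) ^ n • ⊤ : Submodule R M) := by
  induction n with
  | zero =>
      rw [pow_zero, Ideal.one_eq_top, Submodule.top_smul]
      exact Submodule.mem_top
  | succ n ih =>
      rw [pow_succ']
      exact slice_step f hf _ ih (by rw [hx]; exact Submodule.zero_mem _)

end lem1

section transfer
variable {A B M : Type*} [CommRing A] [CommRing B] [Algebra A B]
  [AddCommGroup M] [Module A M] [Module B M] [IsScalarTower A B M]

lemma bsmul_mem_smul_top (J : Ideal A) (c : B) {z : M}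
    (hz : z ∈ (J • ⊤ : Submodule A M)) : c • z ∈ (J • ⊤ : Submodule A M) := by
  refine Submodule.smul_induction_on (p := fun z => c • z ∈ (J • ⊤ : Submodule A M)) hz
    (fun a ha x _ => ?_) (fun x y hx hy => by
      show c • (x + y) ∈ _
      rw [smul_add]; exact Submodule.add_mem _ hx hy)
  show c • (a • x) ∈ _
  rw [smul_comm]
  exact Submodule.smul_mem_smul ha Submodule.mem_top

lemma mem_smul_top_iff_map (J : Ideal A) (m : M) :
    m ∈ (J • ⊤ : Submodule A M) ↔
      m ∈ (J.map (algebraMap A B) • ⊤ : Submodule B M) := by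
  constructor
  · intro hm
    refine Submodule.smul_induction_on
      (p := fun z => z ∈ (J.map (algebraMap A B) • ⊤ : Submodule B M)) hm
      (fun a ha x _ => ?_) (fun x y hx hy => Submodule.add_mem _ hx hy)
    show a • x ∈ _
    rw [← algebraMap_smul B a x]
    exact Submodule.smul_mem_smul (Ideal.mem_map_of_mem _ ha) Submodule.mem_top
  · intro hm
    refine Submodule.smul_induction_on
      (p := fun z => z ∈ (J • ⊤ : Submodule A M)) hm
      (fun b hb x _ => ?_) (fun x y hx hy => Submodule.add_mem _ hx hy)
    refine Submodule.span_induction (p := fun b _ => b • x ∈ (J • ⊤ : Submodule A M)) ?_ ?_ ?_ ?_ hb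
    · rintro b ⟨a, ha, rfl⟩
      show algebraMap A B a • x ∈ _
      rw [algebraMap_smul]
      exact Submodule.smul_mem_smul ha Submodule.mem_top
    · show (0 : B) • x ∈ _
      rw [zero_smul]; exact Submodule.zero_mem _
    · intro b₁ b₂ _ _ h₁ h₂
      show (b₁ + b₂) • x ∈ _
      rw [add_smul]; exact Submodule.add_mem _ h₁ h₂
    · intro c b _ hbx
      show (c • b) • x ∈ _
      rw [smul_eq_mul, mul_smul]
      exact bsmul_mem_smul_top J c hbx

end transfer

section quotTransfer
variable {A M : Type*} [CommRing A] [AddCommGroup M] [Module A M] (I J : Ideal A)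

lemma mem_map_smul_top_quot (m : M) :
    Submodule.Quotient.mk (p := (I • ⊤ : Submodule A M)) m ∈
      ((J.map (Ideal.Quotient.mk I)) • ⊤ :
        Submodule (A ⧸ I) (M ⧸ (I • ⊤ : Submodule A M))) ↔
      m ∈ (J • ⊤ ⊔ I • ⊤ : Submodule A M) := by
  constructor
  · intro hm
    have key : ∀ x ∈ ((J.map (Ideal.Quotient.mk I)) • ⊤ :
        Submodule (A ⧸ I) (M ⧸ (I • ⊤ : Submodule A M))),
        ∀ m' : M, Submodule.Quotient.mk (p := (I • ⊤ : Submodule A M)) m' = x →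
          m' ∈ (J • ⊤ ⊔ I • ⊤ : Submodule A M) := by
      intro x hx
      refine Submodule.smul_induction_on
        (p := fun x => ∀ m' : M, Submodule.Quotient.mk (p := (I • ⊤ : Submodule A M)) m' = x →
          m' ∈ (J • ⊤ ⊔ I • ⊤ : Submodule A M)) hx ?_ ?_
      · intro c hc y _
        obtain ⟨a, haJ, rfl⟩ := Ideal.mem_map_iff_of_surjective _
          Ideal.Quotient.mk_surjective |>.mp hc
        obtain ⟨m₀, rfl⟩ := Submodule.mkQ_surjective _ y
        intro m' hm'
        have hm'' : Submodule.Quotient.mk (p := (I • ⊤ : Submodule A M)) m'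
            = Submodule.Quotient.mk (p := (I • ⊤ : Submodule A M)) (a • m₀) := hm'
        have hd : m' - a • m₀ ∈ (I • ⊤ : Submodule A M) := (Submodule.Quotient.eq _).mp hm''
        have : m' = a • m₀ + (m' - a • m₀) := by abel
        rw [this]
        exact Submodule.add_mem _
          (Submodule.mem_sup_left (Submodule.smul_mem_smul haJ Submodule.mem_top))
          (Submodule.mem_sup_right hd)
      · intro x y hx hy m' hm'
        obtain ⟨mx, rfl⟩ := Submodule.mkQ_surjective _ x
        obtain ⟨my, rfl⟩ := Submodule.mkQ_surjective _ y
        have hm'' : Submodule.Quotient.mk (p := (I • ⊤ : Submodule A M)) m'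
            = Submodule.Quotient.mk (p := (I • ⊤ : Submodule A M)) (mx + my) := hm'
        have hd : m' - (mx + my) ∈ (I • ⊤ : Submodule A M) := (Submodule.Quotient.eq _).mp hm''
        have : m' = (mx + my) + (m' - (mx + my)) := by abel
        rw [this]
        exact Submodule.add_mem _
          (Submodule.add_mem _ (hx mx rfl) (hy my rfl))
          (Submodule.mem_sup_right hd)
    exact key _ hm m rfl
  · intro hm
    obtain ⟨u, hu, v, hv, rfl⟩ := Submodule.mem_sup.mp hm
    have h0 : Submodule.Quotient.mk (p := (I • ⊤ : Submodule A M)) (u + v)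
        = Submodule.Quotient.mk (p := (I • ⊤ : Submodule A M)) u := by
      rw [Submodule.Quotient.eq]
      simpa using hv
    rw [h0]
    refine Submodule.smul_induction_on
      (p := fun z => Submodule.Quotient.mk (p := (I • ⊤ : Submodule A M)) z ∈
        ((J.map (Ideal.Quotient.mk I)) • ⊤ :
          Submodule (A ⧸ I) (M ⧸ (I • ⊤ : Submodule A M)))) hu
      (fun a ha x _ => ?_) (fun x y hx hy => by
        show Submodule.Quotient.mk (p := (I • ⊤ : Submodule A M)) (x + y) ∈ _
        rw [Submodule.Quotient.mk_add]; exact Submodule.add_mem _ hx hy)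
    show Submodule.Quotient.mk (p := (I • ⊤ : Submodule A M)) (a • x) ∈ _
    have : Submodule.Quotient.mk (p := (I • ⊤ : Submodule A M)) (a • x)
        = Ideal.Quotient.mk I a • Submodule.Quotient.mk (p := (I • ⊤ : Submodule A M)) x :=
      rfl
    rw [this]
    exact Submodule.smul_mem_smul (Ideal.mem_map_of_mem _ ha) Submodule.mem_top

end quotTransfer

section reg
variable {A B M : Type*} [CommRing A] [IsLocalRing A] [CommRing B] [IsLocalRing B]
  [IsNoetherianRing B] [Algebra A B] [IsLocalHom (algebraMap A B)]
  [AddCommGroup M] [Module A M] [Module B M] [IsScalarTower A B M] [Module.Finite B M]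
  [Module.Flat A M]

/-- `h` is a nonzerodivisor on `M/IM` for every ideal `I` of `A`. -/
lemma slice_reg (h : B)
    (hf : ∀ m : M, h • m ∈ (maximalIdeal A • ⊤ : Submodule A M) →
      m ∈ (maximalIdeal A • ⊤ : Submodule A M))
    (I : Ideal A) (m : M) (hm : h • m ∈ (I • ⊤ : Submodule A M)) :
    m ∈ (I • ⊤ : Submodule A M) := by
  classical
  by_cases hne : I = ⊤
  · subst hne; rw [Submodule.top_smul]; exact Submodule.mem_top
  have hIm : I ≤ maximalIdeal A := IsLocalRing.le_maximalIdeal hne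
  set 𝔪 := maximalIdeal A with h𝔪
  set A' := A ⧸ I with hA'
  set M' := M ⧸ (I • ⊤ : Submodule A M) with hM'
  haveI : Nontrivial A' := Ideal.Quotient.nontrivial_iff.mpr hne
  haveI : IsLocalRing A' := .of_surjective' _ Ideal.Quotient.mk_surjective
  -- the maximal ideal of A'
  have hmax : maximalIdeal A' = 𝔪.map (Ideal.Quotient.mk I) := by
    apply le_antisymm
    · intro x hx
      obtain ⟨a, rfl⟩ := Ideal.Quotient.mk_surjective x
      by_cases haM : a ∈ 𝔪
      · exact Ideal.mem_map_of_mem _ haM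
      · exfalso
        have : IsUnit a := by
          by_contra hnu
          exact haM (IsLocalRing.mem_maximalIdeal _ |>.mpr hnu)
        exact (IsLocalRing.mem_maximalIdeal _ |>.mp hx) (this.map (Ideal.Quotient.mk I))
    · rw [Ideal.map_le_iff_le_comap]
      intro a ha
      rw [Ideal.mem_comap]
      rw [IsLocalRing.mem_maximalIdeal]
      intro hu
      obtain ⟨b, hb⟩ := hu.exists_right_inv
      obtain ⟨c, rfl⟩ := Ideal.Quotient.mk_surjective b
      rw [← map_mul, ← map_one (Ideal.Quotient.mk I), Ideal.Quotient.mk_eq_mk_iff_sub_mem] at hb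
      have h1 : (1 : A) ∈ 𝔪 := by
        have := Submodule.sub_mem _ (Ideal.mul_mem_right c _ ha) (hIm hb)
        simpa using this
      exact (Ideal.IsMaximal.ne_top (IsLocalRing.maximalIdeal.isMaximal A))
        (Ideal.eq_top_iff_one _ |>.mpr h1)
  -- flatness of M' over A'
  haveI : Module.Flat A' M' := by
    have key : ∀ (c : A') (t : (A ⧸ I) ⊗[A] M),
        TensorProduct.quotTensorEquivQuotSMul M I (c • t)
          = c • TensorProduct.quotTensorEquivQuotSMul M I t := by
      intro c t
      obtain ⟨a, rfl⟩ := Ideal.Quotient.mk_surjective c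
      induction t using TensorProduct.induction_on with
      | zero => simp
      | tmul x n =>
          obtain ⟨b, rfl⟩ := Ideal.Quotient.mk_surjective x
          have h1 : (Ideal.Quotient.mk I a) • ((Ideal.Quotient.mk I b) ⊗ₜ[A] n)
              = (Ideal.Quotient.mk I (a * b)) ⊗ₜ[A] n := by
            rw [TensorProduct.smul_tmul', smul_eq_mul, ← map_mul]
          rw [h1, TensorProduct.quotTensorEquivQuotSMul_mk_tmul,
            TensorProduct.quotTensorEquivQuotSMul_mk_tmul]
          show _ = Submodule.Quotient.mk (a • (b • n))
          rw [← mul_smul]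
      | add s t hs ht =>
          rw [smul_add, map_add, map_add, smul_add, hs, ht]
    have e' : (A' ⊗[A] M) ≃ₗ[A'] M' :=
      { TensorProduct.quotTensorEquivQuotSMul M I with
        map_smul' := key }
    exact Module.Flat.of_linearEquiv e'.symm
  -- the induced endomorphism of M'
  set fA : M →ₗ[A] M := ((LinearMap.lsmul B M h).restrictScalars A) with hfA
  have hfA_apply : ∀ x : M, fA x = h • x := fun x => rfl
  have hmapf : (I • ⊤ : Submodule A M) ≤ (I • ⊤ : Submodule A M).comap fA := by
    intro z hz
    rw [Submodule.mem_comap, hfA_apply]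
    exact bsmul_mem_smul_top I h hz
  set f' : M' →ₗ[A] M' := Submodule.mapQ _ _ fA hmapf with hf'
  have hf'_mk : ∀ x : M, f' (Submodule.Quotient.mk x) = Submodule.Quotient.mk (h • x) :=
    fun x => rfl
  set f'' : M' →ₗ[A'] M' :=
    { toFun := f', map_add' := map_add f',
      map_smul' := by
        rintro ⟨a⟩ x
        exact map_smul f' a x } with hf''
  -- hypothesis for slice_ker over A'
  have hyp : ∀ x : M', f'' x ∈ (maximalIdeal A' • ⊤ : Submodule A' M') →
      x ∈ (maximalIdeal A' • ⊤ : Submodule A' M') := by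
    intro x hx
    obtain ⟨x, rfl⟩ := Submodule.mkQ_surjective _ x
    rw [Submodule.mkQ_apply] at hx ⊢
    have hx' : Submodule.Quotient.mk (p := (I • ⊤ : Submodule A M)) (h • x) ∈
        ((𝔪.map (Ideal.Quotient.mk I)) • ⊤ : Submodule A' M') := by
      rw [← hmax]
      exact hx
    rw [mem_map_smul_top_quot] at hx'
    have hsup : (𝔪 • ⊤ ⊔ I • ⊤ : Submodule A M) = (𝔪 • ⊤ : Submodule A M) :=
      sup_eq_left.mpr (Submodule.smul_mono hIm le_rfl)
    rw [hsup] at hx'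
    have := hf x hx'
    rw [hmax, mem_map_smul_top_quot, hsup]
    exact this
  -- apply slice_ker
  have hker : f'' (Submodule.Quotient.mk (p := (I • ⊤ : Submodule A M)) m) = 0 := by
    show f' _ = _
    rw [hf'_mk, Submodule.Quotient.mk_eq_zero]
    exact hm
  have hpow : ∀ n : ℕ, m ∈ ((𝔪 ^ n) • ⊤ ⊔ I • ⊤ : Submodule A M) := by
    intro n
    have := slice_ker f'' hyp hker n
    rw [hmax, ← Ideal.map_pow, mem_map_smul_top_quot] at this
    exact this
  -- transfer to B and use Krull intersection
  set NI : Submodule B M := (I.map (algebraMap A B)) • ⊤ with hNI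
  set M'' := M ⧸ NI with hM''
  have hBmem : ∀ n : ℕ, Submodule.Quotient.mk (p := NI) m ∈
      ((maximalIdeal B ^ n) • ⊤ : Submodule B M'') := by
    intro n
    obtain ⟨u, hu, v, hv, huv⟩ := Submodule.mem_sup.mp (hpow n)
    have hvNI : v ∈ NI := (mem_smul_top_iff_map I v).mp hv
    have humk : Submodule.Quotient.mk (p := NI) m = Submodule.Quotient.mk (p := NI) u := by
      rw [← huv, Submodule.Quotient.eq]
      simpa using hvNI
    rw [humk]
    -- u ∈ 𝔪^n • ⊤ (over A)  ⟹  u ∈ 𝔫^n • ⊤ (over B)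
    have hu' : u ∈ ((maximalIdeal B ^ n) • ⊤ : Submodule B M) := by
      have h1 : u ∈ ((𝔪 ^ n).map (algebraMap A B) • ⊤ : Submodule B M) :=
        (mem_smul_top_iff_map (𝔪 ^ n) u).mp hu
      have h2 : (𝔪 ^ n).map (algebraMap A B) ≤ maximalIdeal B ^ n := by
        rw [Ideal.map_pow]
        refine Ideal.pow_right_mono ?_ n
        rw [Ideal.map_le_iff_le_comap]
        intro a ha
        rw [Ideal.mem_comap, IsLocalRing.mem_maximalIdeal]
        intro hub
        exact (IsLocalRing.mem_maximalIdeal a |>.mp (h𝔪 ▸ ha))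
          (IsLocalHom.map_nonunit (f := algebraMap A B) a hub)
      exact Submodule.smul_mono h2 le_rfl h1
    refine Submodule.smul_induction_on
      (p := fun z => Submodule.Quotient.mk (p := NI) z ∈
        ((maximalIdeal B ^ n) • ⊤ : Submodule B M'')) hu'
      (fun b hb x _ => ?_) (fun x y hx hy => by
        show Submodule.Quotient.mk (p := NI) (x + y) ∈ _
        rw [Submodule.Quotient.mk_add]; exact Submodule.add_mem _ hx hy)
    show Submodule.Quotient.mk (p := NI) (b • x) ∈ _
    rw [Submodule.Quotient.mk_smul]
    exact Submodule.smul_mem_smul hb Submodule.mem_top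
  -- replace M'' by a same-universe model to apply the Krull intersection theorem
  obtain ⟨n₀, p, hp⟩ := Module.Finite.exists_fin' B M''
  set M₃ := (Fin n₀ → B) ⧸ LinearMap.ker p with hM₃
  set e : M₃ ≃ₗ[B] M'' := p.quotKerEquivOfSurjective hp with he
  have hx : ∀ n : ℕ, e.symm (Submodule.Quotient.mk (p := NI) m) ∈
      ((maximalIdeal B ^ n) • ⊤ : Submodule B M₃) := by
    intro n
    have h1 : Submodule.map (e.symm : M'' →ₗ[B] M₃) ((maximalIdeal B ^ n) • ⊤)
        = ((maximalIdeal B ^ n) • ⊤ : Submodule B M₃) := by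
      rw [Submodule.map_smul'', Submodule.map_top, LinearEquiv.range]
    rw [← h1]
    exact Submodule.mem_map_of_mem (hBmem n)
  have hbot := Ideal.iInf_pow_smul_eq_bot_of_isLocalRing (R := B) (M := M₃)
    (maximalIdeal B) (Ideal.IsMaximal.ne_top (IsLocalRing.maximalIdeal.isMaximal B))
  have h0 : e.symm (Submodule.Quotient.mk (p := NI) m) = 0 := by
    rw [← Submodule.mem_bot (R := B), ← hbot, Submodule.mem_iInf]
    exact hx
  have h0' : Submodule.Quotient.mk (p := NI) m = 0 := by
    have := congrArg e h0
    rwa [LinearEquiv.apply_symm_apply, map_zero] at this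
  rw [Submodule.Quotient.mk_eq_zero] at h0'
  exact (mem_smul_top_iff_map I m).mpr h0'

end reg


/-- Slicing criterion for flatness.  Let `(A,𝔪) → (B,𝔫)` be a local homomorphism of
Noetherian local rings, `M` a finite `B`-module flat over `A`, and `h ∈ 𝔫` whose image is a
nonzerodivisor on `M/𝔪M`.  Then `h` is a nonzerodivisor on `M` and `M/hM` is flat over `A`. -/
theorem stmt12 (A B M : Type*) [CommRing A] [CommRing B] [IsLocalRing A] [IsLocalRing B]
    [IsNoetherianRing A] [IsNoetherianRing B] [Algebra A B] [IsLocalHom (algebraMap A B)]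
    [AddCommGroup M] [Module A M] [Module B M] [IsScalarTower A B M] [Module.Finite B M]
    [Module.Flat A M] (h : B) (hh : h ∈ maximalIdeal B)
    (hreg : ∀ m : M ⧸ ((maximalIdeal A).map (algebraMap A B) • (⊤ : Submodule B M)),
      h • m = 0 → m = 0) :
    (∀ m : M, h • m = 0 → m = 0) ∧
      Module.Flat A (M ⧸ ((Ideal.span {h} : Ideal B) • (⊤ : Submodule B M))) := by
  classical
  -- translate the regularity hypothesis
  have hf : ∀ m : M, h • m ∈ (maximalIdeal A • ⊤ : Submodule A M) →
      m ∈ (maximalIdeal A • ⊤ : Submodule A M) := by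
    intro m hm
    rw [mem_smul_top_iff_map (B := B)] at hm ⊢
    have h0 : Submodule.Quotient.mk
        (p := ((maximalIdeal A).map (algebraMap A B) • (⊤ : Submodule B M))) (h • m) = 0 := by
      rw [Submodule.Quotient.mk_eq_zero]; exact hm
    rw [Submodule.Quotient.mk_smul] at h0
    have := hreg _ h0
    rwa [Submodule.Quotient.mk_eq_zero] at this
  constructor
  · -- h is a nonzerodivisor on M
    intro m hm
    have : m ∈ ((⊥ : Ideal A) • ⊤ : Submodule A M) := by
      apply slice_reg h hf
      rw [hm]
      exact Submodule.zero_mem _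
    rwa [Submodule.bot_smul, Submodule.mem_bot] at this
  · -- M/hM is flat over A
    set Nh : Submodule B M := (Ideal.span {h} : Ideal B) • ⊤ with hNh
    set M₂ := M ⧸ Nh with hM₂
    have hNh_mem : ∀ z ∈ Nh, ∃ m₁ : M, z = h • m₁ := by
      intro z hz
      refine Submodule.smul_induction_on (p := fun z => ∃ m₁ : M, z = h • m₁) hz ?_ ?_
      · intro c hc x _
        obtain ⟨b, rfl⟩ := Ideal.mem_span_singleton'.mp hc
        exact ⟨b • x, by rw [mul_comm, mul_smul]⟩
      · rintro x y ⟨x₁, rfl⟩ ⟨y₁, rfl⟩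
        exact ⟨x₁ + y₁, by rw [smul_add]⟩
    set q : M →ₗ[A] M₂ := Nh.mkQ.restrictScalars A with hq
    have hq_surj : Function.Surjective q := Submodule.mkQ_surjective Nh
    set fA : M →ₗ[A] M := ((LinearMap.lsmul B M h).restrictScalars A) with hfA
    have hqf : q ∘ₗ fA = 0 := by
      ext x
      show Submodule.Quotient.mk (p := Nh) (h • x) = 0
      rw [Submodule.Quotient.mk_eq_zero]
      exact Submodule.smul_mem_smul (Ideal.mem_span_singleton_self h) Submodule.mem_top
    rw [Module.Flat.iff_rTensor_injective']
    intro I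
    rw [injective_iff_map_eq_zero]
    intro t₂ ht₂
    obtain ⟨t, rfl⟩ := LinearMap.lTensor_surjective (↥I) (g := q) hq_surj t₂
    -- naturality squares
    have hnat : (I.subtype.rTensor M₂) ∘ₗ (q.lTensor I) = (q.lTensor A) ∘ₗ (I.subtype.rTensor M) := by
      rw [LinearMap.rTensor_comp_lTensor, LinearMap.lTensor_comp_rTensor]
    have hlid : (TensorProduct.lid A M₂).toLinearMap ∘ₗ (q.lTensor A)
        = q ∘ₗ (TensorProduct.lid A M).toLinearMap := by
      apply TensorProduct.ext'
      intro a x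
      simp
    -- the image of t in M lands in I • M and in Nh
    set m₀ : M := slicePhi I t with hm₀
    have hm₀I : m₀ ∈ (I • ⊤ : Submodule A M) := by
      rw [← slicePhi_range]
      exact ⟨t, rfl⟩
    have hqm₀ : q m₀ = 0 := by
      have h1 : (TensorProduct.lid A M₂).toLinearMap ((q.lTensor A) ((I.subtype.rTensor M) t))
          = q (slicePhi I t) := by
        rw [← LinearMap.comp_apply, hlid]
        rfl
      have h2 : (q.lTensor A) ((I.subtype.rTensor M) t)
          = (I.subtype.rTensor M₂) ((q.lTensor I) t) := by
        rw [← LinearMap.comp_apply, ← hnat]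
        rfl
      rw [← h1, h2, ht₂, map_zero]
    have hm₀Nh : m₀ ∈ Nh := by rwa [← Submodule.Quotient.mk_eq_zero (p := Nh)]
    obtain ⟨m₁, hm₁⟩ := hNh_mem m₀ hm₀Nh
    have hm₁I : m₁ ∈ (I • ⊤ : Submodule A M) := by
      apply slice_reg h hf
      rw [← hm₁]
      exact hm₀I
    rw [← slicePhi_range] at hm₁I
    obtain ⟨s, hs⟩ := hm₁I
    have hts : t = fA.lTensor I s := by
      apply slicePhi_injective (M := M) I
      have := congrArg (fun w => w s) (slicePhi_comp I fA)
      simp only [LinearMap.comp_apply] at this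
      rw [this, hs]
      show slicePhi I t = h • m₁
      rw [← hm₁, hm₀]
    rw [hts, ← LinearMap.comp_apply (q.lTensor I), ← LinearMap.lTensor_comp, hqf,
      LinearMap.lTensor_zero, LinearMap.zero_apply]
end

section
/- Let f : X → Y and g : Y → Z be morphisms in a site-like setting with a contravariant functor F valued in spaces, and define a morphism to be 'of F-descent' if F of the target is the limit of F applied to the Čech nerve of the morphism, and 'of universal F-descent' if every base change is of F-descent. Then: (1) if g ∘ f is of universal F-descent, so is g; (2) if f is of universal F-descent and g is of F-descent, then g ∘ f is of F-descent. -/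
open CategoryTheory CategoryTheory.Limits Opposite

variable {C : Type u} [Category.{v} C] [HasPullbacks C]

/-- A morphism `h : U ⟶ V` is of `F`-descent (for a presheaf of sets `F`) if `F V` is the
equalizer of `F U ⇉ F (U ×_V U)`, i.e. every section over `U` equalized by the two
projections of the Čech nerve descends uniquely to `V`. -/
def IsFDescent (F : Cᵒᵖ ⥤ Type w) {U V : C} (h : U ⟶ V) : Prop :=
  ∀ b : F.obj (op U),
    F.map (pullback.fst h h).op b = F.map (pullback.snd h h).op b →
      ∃! a : F.obj (op V), F.map h.op a = b

/-- `h` is of universal `F`-descent if every base change of `h` is of `F`-descent. -/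
def IsUniversalFDescent (F : Cᵒᵖ ⥤ Type w) {U V : C} (h : U ⟶ V) : Prop :=
  ∀ {W : C} (g : W ⟶ V), IsFDescent F (pullback.snd h g)

section Aux

variable (F : Cᵒᵖ ⥤ Type w)

omit [HasPullbacks C] in
lemma mapop {A B D : C} (φ : A ⟶ B) (ψ : B ⟶ D) (x : F.obj (op D)) :
    F.map (φ ≫ ψ).op x = F.map φ.op (F.map ψ.op x) := by
  rw [op_comp, FunctorToTypes.map_comp_apply]

/-- Descent implies injectivity of restriction. -/
lemma descent_inj {U V : C} {q : U ⟶ V} (hq : IsFDescent F q) :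
    Function.Injective (F.map q.op) := by
  intro a a' h
  have hb : F.map (pullback.fst q q).op (F.map q.op a)
      = F.map (pullback.snd q q).op (F.map q.op a) := by
    rw [← mapop, ← mapop, pullback.condition]
  obtain ⟨c, -, hu⟩ := hq (F.map q.op a) hb
  exact (hu a rfl).trans (hu a' h.symm).symm

/-- `IsFDescent` is invariant under isomorphism over the base. -/
lemma descent_of_iso {A B T : C} (i : A ≅ B) {p : A ⟶ T} {q : B ⟶ T}
    (hip : i.hom ≫ q = p) (hq : IsFDescent F q) : IsFDescent F p := by
  have hiq : i.inv ≫ p = q := by rw [← hip, Iso.inv_hom_id_assoc]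
  intro b hb
  -- comparison map between the Čech squares
  set j' : pullback q q ⟶ pullback p p :=
    pullback.lift (pullback.fst q q ≫ i.inv) (pullback.snd q q ≫ i.inv)
      (by simp only [Category.assoc, hiq, pullback.condition]) with hj'
  have j'f : j' ≫ pullback.fst p p = pullback.fst q q ≫ i.inv := by
    rw [hj']; exact pullback.lift_fst _ _ _
  have j's : j' ≫ pullback.snd p p = pullback.snd q q ≫ i.inv := by
    rw [hj']; exact pullback.lift_snd _ _ _
  have key : F.map (pullback.fst q q).op (F.map i.inv.op b)
      = F.map (pullback.snd q q).op (F.map i.inv.op b) := by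
    calc F.map (pullback.fst q q).op (F.map i.inv.op b)
        = F.map (j' ≫ pullback.fst p p).op b := by rw [j'f, mapop]
      _ = F.map (j' ≫ pullback.snd p p).op b := by rw [mapop, mapop, hb]
      _ = F.map (pullback.snd q q).op (F.map i.inv.op b) := by rw [j's, mapop]
  obtain ⟨a, ha, hu⟩ := hq (F.map i.inv.op b) key
  refine ⟨a, ?_, ?_⟩
  · show F.map p.op a = b
    rw [← hip, mapop, ha, ← mapop, Iso.hom_inv_id, op_id, FunctorToTypes.map_id_apply]
  · intro a' ha'
    refine hu a' ?_
    show F.map q.op a' = F.map i.inv.op b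
    rw [← hiq, mapop, ha']

/-- Universal descent is stable under base change. -/
lemma universal_base_change {U V W : C} {h : U ⟶ V} (hh : IsUniversalFDescent F h)
    (w : W ⟶ V) : IsUniversalFDescent F (pullback.snd h w) := by
  intro W' v
  exact descent_of_iso F (pullbackLeftPullbackSndIso h w v)
    (pullbackLeftPullbackSndIso_hom_snd h w v) (hh (v ≫ w))

/-- Key lemma: if `s = t ≫ h` is of descent and its base change along `h` is of descent,
then `h` is of descent. -/
lemma descent_of_cover {U' U V : C} (t : U' ⟶ U) (h : U ⟶ V) (s : U' ⟶ V)
    (hs : t ≫ h = s) (hcov : IsFDescent F s) (hb : IsFDescent F (pullback.snd s h)) :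
    IsFDescent F h := by
  subst hs
  intro b hbeq
  -- the comparison map between the Čech squares of `t ≫ h` and of `h`
  set m : pullback (t ≫ h) (t ≫ h) ⟶ pullback h h :=
    pullback.lift (pullback.fst (t ≫ h) (t ≫ h) ≫ t) (pullback.snd (t ≫ h) (t ≫ h) ≫ t)
      (by simp only [Category.assoc, pullback.condition]) with hm
  have mf : m ≫ pullback.fst h h = pullback.fst (t ≫ h) (t ≫ h) ≫ t := by
    rw [hm]; exact pullback.lift_fst _ _ _
  have ms : m ≫ pullback.snd h h = pullback.snd (t ≫ h) (t ≫ h) ≫ t := by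
    rw [hm]; exact pullback.lift_snd _ _ _
  have hceq : F.map (pullback.fst (t ≫ h) (t ≫ h)).op (F.map t.op b)
      = F.map (pullback.snd (t ≫ h) (t ≫ h)).op (F.map t.op b) := by
    calc F.map (pullback.fst (t ≫ h) (t ≫ h)).op (F.map t.op b)
        = F.map (m ≫ pullback.fst h h).op b := by rw [mf, mapop]
      _ = F.map (m ≫ pullback.snd h h).op b := by rw [mapop, mapop, hbeq]
      _ = F.map (pullback.snd (t ≫ h) (t ≫ h)).op (F.map t.op b) := by rw [ms, mapop]
  obtain ⟨a, ha, hu⟩ := hcov (F.map t.op b) hceq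
  have hinj := descent_inj F hb
  refine ⟨a, ?_, ?_⟩
  · show F.map h.op a = b
    apply hinj
    -- compare after restriction along the base change `p := pullback.snd (t ≫ h) h`
    set u : pullback (t ≫ h) h ⟶ pullback h h :=
      pullback.lift (pullback.fst (t ≫ h) h ≫ t) (pullback.snd (t ≫ h) h)
        (by simp only [Category.assoc, pullback.condition]) with hu'
    have uf : u ≫ pullback.fst h h = pullback.fst (t ≫ h) h ≫ t := by
      rw [hu']; exact pullback.lift_fst _ _ _
    have us : u ≫ pullback.snd h h = pullback.snd (t ≫ h) h := by
      rw [hu']; exact pullback.lift_snd _ _ _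
    calc F.map (pullback.snd (t ≫ h) h).op (F.map h.op a)
        = F.map (pullback.fst (t ≫ h) h).op (F.map (t ≫ h).op a) := by
          rw [← mapop, ← pullback.condition, mapop]
      _ = F.map (u ≫ pullback.fst h h).op b := by rw [ha, uf, mapop]
      _ = F.map (u ≫ pullback.snd h h).op b := by rw [mapop, mapop, hbeq]
      _ = F.map (pullback.snd (t ≫ h) h).op b := by rw [us]
  · intro a' ha'
    refine hu a' ?_
    show F.map (t ≫ h).op a' = F.map t.op b
    rw [mapop, ha']

end Aux

/-- Liu–Zheng descent lemma: (1) if `g ∘ f` is of universal `F`-descent, so is `g`;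
(2) if `f` is of universal `F`-descent and `g` is of `F`-descent, then `g ∘ f` is of
`F`-descent. -/
theorem stmt14 (F : Cᵒᵖ ⥤ Type w) {X Y Z : C} (f : X ⟶ Y) (g : Y ⟶ Z) :
    (IsUniversalFDescent F (f ≫ g) → IsUniversalFDescent F g) ∧
    (IsUniversalFDescent F f → IsFDescent F g → IsFDescent F (f ≫ g)) := by
  constructor
  · -- Part (1)
    intro H W w
    set t : pullback (f ≫ g) w ⟶ pullback g w :=
      pullback.lift (pullback.fst (f ≫ g) w ≫ f) (pullback.snd (f ≫ g) w)
        (by simp only [Category.assoc, pullback.condition]) with ht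
    have htc : t ≫ pullback.snd g w = pullback.snd (f ≫ g) w := by
      rw [ht]; exact pullback.lift_snd _ _ _
    exact descent_of_cover F t (pullback.snd g w) (pullback.snd (f ≫ g) w) htc (H w)
      (universal_base_change F H w (pullback.snd g w))
  · -- Part (2)
    intro hf hg
    -- f itself is of descent
    have hfd : IsFDescent F f := by
      refine descent_of_iso F
        (⟨pullback.lift (𝟙 X) f (by simp), pullback.fst f (𝟙 Y), ?_, ?_⟩ :
          X ≅ pullback f (𝟙 Y)) (pullback.lift_snd _ _ _) (hf (𝟙 Y))
      · exact pullback.lift_fst _ _ _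
      · apply pullback.hom_ext
        · rw [Category.assoc, pullback.lift_fst, Category.comp_id, Category.id_comp]
        · rw [Category.assoc, pullback.lift_snd, Category.id_comp, pullback.condition, Category.comp_id]
    intro b hb
    -- b is equalized for the Čech nerve of f
    set m : pullback f f ⟶ pullback (f ≫ g) (f ≫ g) :=
      pullback.lift (pullback.fst f f) (pullback.snd f f)
        (by rw [← Category.assoc, pullback.condition, Category.assoc]) with hm
    have mf : m ≫ pullback.fst (f ≫ g) (f ≫ g) = pullback.fst f f := by
      rw [hm]; exact pullback.lift_fst _ _ _
    have ms : m ≫ pullback.snd (f ≫ g) (f ≫ g) = pullback.snd f f := by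
      rw [hm]; exact pullback.lift_snd _ _ _
    have hbf : F.map (pullback.fst f f).op b = F.map (pullback.snd f f).op b := by
      rw [← mf, ← ms, mapop, mapop, hb]
    obtain ⟨a₁, ha₁, hu₁⟩ := hfd b hbf
    -- comparison map between the two Čech squares
    set k : pullback (f ≫ g) (f ≫ g) ⟶ pullback g g :=
      pullback.lift (pullback.fst (f ≫ g) (f ≫ g) ≫ f) (pullback.snd (f ≫ g) (f ≫ g) ≫ f)
        (by simp only [Category.assoc, pullback.condition]) with hk
    have kf : k ≫ pullback.fst g g = pullback.fst (f ≫ g) (f ≫ g) ≫ f := by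
      rw [hk]; exact pullback.lift_fst _ _ _
    have ks : k ≫ pullback.snd g g = pullback.snd (f ≫ g) (f ≫ g) ≫ f := by
      rw [hk]; exact pullback.lift_snd _ _ _
    -- factor k through the base change of f along pullback.fst g g
    set j : pullback (f ≫ g) (f ≫ g) ⟶ pullback f (pullback.fst g g) :=
      pullback.lift (pullback.fst (f ≫ g) (f ≫ g)) k kf.symm with hj
    have jf : j ≫ pullback.fst f (pullback.fst g g) = pullback.fst (f ≫ g) (f ≫ g) := by
      rw [hj]; exact pullback.lift_fst _ _ _
    have hjk : j ≫ pullback.snd f (pullback.fst g g) = k := by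
      rw [hj]; exact pullback.lift_snd _ _ _
    obtain ⟨q, hq'⟩ : ∃ q' : pullback f (pullback.fst g g) ⟶ Y,
        q' = pullback.snd f (pullback.fst g g) ≫ pullback.snd g g := ⟨_, rfl⟩
    have c1 : pullback.snd (f ≫ g) (f ≫ g) ≫ f = j ≫ q := by
      rw [hq', ← Category.assoc, hjk, ks]
    -- j is, up to iso, the base change of f along q; hence of descent
    have c2 : (pullback.snd f q ≫ pullback.fst f (pullback.fst g g)) ≫ f ≫ g
        = pullback.fst f q ≫ f ≫ g := by
      simp only [Category.assoc]
      rw [pullback.condition_assoc (f := f) (g := pullback.fst g g) g]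
      rw [pullback.condition (f := g) (g := g)]
      rw [pullback.condition_assoc (f := f) (g := q) g, hq']
      simp only [Category.assoc]
    have hjq : IsFDescent F j := by
      refine descent_of_iso F
        (⟨pullback.lift (pullback.snd (f ≫ g) (f ≫ g)) j c1,
          pullback.lift (pullback.snd f q ≫ pullback.fst f (pullback.fst g g))
            (pullback.fst f q) c2, ?_, ?_⟩ :
          pullback (f ≫ g) (f ≫ g) ≅ pullback f q) (pullback.lift_snd _ _ _) (hf q)
      · apply pullback.hom_ext
        · simp only [Category.assoc, pullback.lift_fst, pullback.lift_fst_assoc,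
            pullback.lift_snd, pullback.lift_snd_assoc, Category.id_comp]
          rw [jf]
        · rw [Category.assoc, pullback.lift_snd, pullback.lift_fst, Category.id_comp]
      · apply pullback.hom_ext
        · rw [Category.assoc, pullback.lift_fst, pullback.lift_snd, Category.id_comp]
        · rw [Category.assoc, pullback.lift_snd, Category.id_comp]
          apply pullback.hom_ext
          · rw [Category.assoc, jf, pullback.lift_fst]
          · rw [Category.assoc, hjk]
            apply pullback.hom_ext
            · rw [Category.assoc, kf, pullback.lift_fst_assoc, Category.assoc,
                pullback.condition (f := f) (g := pullback.fst g g)]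
              simp only [Category.assoc]
            · rw [Category.assoc, ks, pullback.lift_snd_assoc,
                pullback.condition (f := f) (g := q), hq']
              simp only [Category.assoc]
    have hjinj := descent_inj F hjq
    have hsQinj := descent_inj F (hf (pullback.fst g g))
    -- a₁ is equalized for the Čech nerve of g
    have ha₁eq : F.map (pullback.fst g g).op a₁ = F.map (pullback.snd g g).op a₁ := by
      apply hsQinj
      apply hjinj
      have hmor1 : j ≫ pullback.snd f (pullback.fst g g) ≫ pullback.fst g g
          = pullback.fst (f ≫ g) (f ≫ g) ≫ f := by
        rw [← Category.assoc, hjk, kf]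
      have hmor2 : j ≫ pullback.snd f (pullback.fst g g) ≫ pullback.snd g g
          = pullback.snd (f ≫ g) (f ≫ g) ≫ f := by
        rw [← Category.assoc, hjk, ks]
      calc F.map j.op (F.map (pullback.snd f (pullback.fst g g)).op
            (F.map (pullback.fst g g).op a₁))
          = F.map (j ≫ pullback.snd f (pullback.fst g g) ≫ pullback.fst g g).op a₁ := by
            rw [mapop, mapop]
        _ = F.map (pullback.fst (f ≫ g) (f ≫ g)).op b := by rw [hmor1, mapop, ha₁]
        _ = F.map (pullback.snd (f ≫ g) (f ≫ g)).op b := hb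
        _ = F.map (j ≫ pullback.snd f (pullback.fst g g) ≫ pullback.snd g g).op a₁ := by
            rw [hmor2, mapop, ha₁]
        _ = F.map j.op (F.map (pullback.snd f (pullback.fst g g)).op
            (F.map (pullback.snd g g).op a₁)) := by rw [mapop, mapop]
    obtain ⟨a, ha, hu⟩ := hg a₁ ha₁eq
    refine ⟨a, ?_, ?_⟩
    · show F.map (f ≫ g).op a = b
      rw [mapop, ha, ha₁]
    · intro a' ha'
      refine hu a' (hu₁ (F.map g.op a') ?_)
      show F.map f.op (F.map g.op a') = b
      rw [← mapop, ha']
end
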